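/- Fix β ∈ ℝ, K > 0 and C₀ > 0. There exists a constant C > 0, depending only on β, K and C₀, such that the following holds for every real μ ≥ 1: if z = (z¹, z²) : ℝ → ℂ × ℂ is a differentiable solution of dz¹/dτ = i(z¹ + β z²), dz²/dτ = i(β z¹ + μ z²), whose initial data satisfy |z¹(0)|² + |z²(0)|² ≤ K² and μ|z²(0)|² ≤ C₀, then μ|z²(τ)|² ≤ C for every τ ∈ ℝ; in particular sup_{τ∈ℝ} |z²(τ)| ≤ (C/μ)^{1/2}, which tends to 0 as μ → +∞. -/

import Mathlib

private lemma const_of_deriv0 {f : ℝ → ℂ} (h : ∀ τ, HasDerivAt f 0 τ) (τ : ℝ) : f τ = f 0 :=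
  is_const_of_deriv_eq_zero (fun x => (h x).differentiableAt) (fun x => (h x).deriv) τ 0

private lemma conj_mul_self_re (a : ℂ) : ((starRingEnd ℂ) a * a).re = ‖a‖ ^ 2 := by
  simp [Complex.mul_re, Complex.sq_norm, Complex.normSq_apply]

private lemma conj_swap_re (a b : ℂ) :
    ((starRingEnd ℂ) b * a).re = ((starRingEnd ℂ) a * b).re := by
  simp [Complex.mul_re]; ring

/-- For the model system, if the initial data are bounded by `K` and
satisfy `μ|z²(0)|² ≤ C₀`, then `μ|z²(τ)|² ≤ C` for all `τ`, with `C` depending only on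
`β, K, C₀`; in particular `sup_τ |z²(τ)| ≤ (C/μ)^{1/2} → 0` as `μ → +∞`. -/
theorem model_system_constraining_potential
    (β K C₀ : ℝ) (hK : 0 < K) (hC₀ : 0 < C₀) :
    ∃ C : ℝ, 0 < C ∧ ∀ μ : ℝ, 1 ≤ μ → ∀ z1 z2 : ℝ → ℂ,
      (∀ τ : ℝ, HasDerivAt z1 (Complex.I * (z1 τ + (β : ℂ) * z2 τ)) τ) →
      (∀ τ : ℝ, HasDerivAt z2 (Complex.I * ((β : ℂ) * z1 τ + (μ : ℂ) * z2 τ)) τ) →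
      ‖z1 0‖ ^ 2 + ‖z2 0‖ ^ 2 ≤ K ^ 2 →
      μ * ‖z2 0‖ ^ 2 ≤ C₀ →
      (∀ τ : ℝ, μ * ‖z2 τ‖ ^ 2 ≤ C) ∧
      (∀ τ : ℝ, ‖z2 τ‖ ≤ Real.sqrt (C / μ)) := by
  refine ⟨C₀ + K ^ 2 + 2 * |β| * K ^ 2 + 1, by positivity, ?_⟩
  intro μ hμ z1 z2 h1 h2 hinit hC0init
  set C := C₀ + K ^ 2 + 2 * |β| * K ^ 2 + 1 with hC
  -- conservation of the norm
  have hN0 : ∀ τ : ℝ, (starRingEnd ℂ) (z1 τ) * z1 τ + (starRingEnd ℂ) (z2 τ) * z2 τ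
      = (starRingEnd ℂ) (z1 0) * z1 0 + (starRingEnd ℂ) (z2 0) * z2 0 := by
    intro τ
    refine const_of_deriv0
      (f := fun τ => (starRingEnd ℂ) (z1 τ) * z1 τ + (starRingEnd ℂ) (z2 τ) * z2 τ)
      (fun τ => ?_) τ
    have := ((h1 τ).star.mul (h1 τ)).add ((h2 τ).star.mul (h2 τ))
    convert this using 1
    case e'_8 => rfl
    case e'_4 => rfl
    simp only [Complex.star_def, map_mul, map_add, Complex.conj_I, Complex.conj_ofReal]
    ring
  -- conservation of the energy
  have hE0 : ∀ τ : ℝ, (starRingEnd ℂ) (z1 τ) * z1 τ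
      + (β : ℂ) * ((starRingEnd ℂ) (z1 τ) * z2 τ + (starRingEnd ℂ) (z2 τ) * z1 τ)
      + (μ : ℂ) * ((starRingEnd ℂ) (z2 τ) * z2 τ)
      = (starRingEnd ℂ) (z1 0) * z1 0
      + (β : ℂ) * ((starRingEnd ℂ) (z1 0) * z2 0 + (starRingEnd ℂ) (z2 0) * z1 0)
      + (μ : ℂ) * ((starRingEnd ℂ) (z2 0) * z2 0) := by
    intro τ
    refine const_of_deriv0
      (f := fun τ => (starRingEnd ℂ) (z1 τ) * z1 τ
        + (β : ℂ) * ((starRingEnd ℂ) (z1 τ) * z2 τ + (starRingEnd ℂ) (z2 τ) * z1 τ)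
        + (μ : ℂ) * ((starRingEnd ℂ) (z2 τ) * z2 τ))
      (fun τ => ?_) τ
    have := (((h1 τ).star.mul (h1 τ)).add
        (HasDerivAt.const_mul (β : ℂ)
          (((h1 τ).star.mul (h2 τ)).add ((h2 τ).star.mul (h1 τ))))).add
        (HasDerivAt.const_mul (μ : ℂ) ((h2 τ).star.mul (h2 τ)))
    convert this using 1
    case e'_8 => rfl
    case e'_4 => rfl
    simp only [Complex.star_def, map_mul, map_add, Complex.conj_I, Complex.conj_ofReal]
    ring
  -- real form of norm conservation
  have hnorm : ∀ τ : ℝ, ‖z1 τ‖ ^ 2 + ‖z2 τ‖ ^ 2 ≤ K ^ 2 := by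
    intro τ
    have := congrArg Complex.re (hN0 τ)
    simp only [Complex.add_re, conj_mul_self_re] at this
    linarith
  -- real form of energy conservation
  have hEre : ∀ τ : ℝ, ‖z1 τ‖ ^ 2
      + 2 * β * ((starRingEnd ℂ) (z1 τ) * z2 τ).re + μ * ‖z2 τ‖ ^ 2
      = ‖z1 0‖ ^ 2
      + 2 * β * ((starRingEnd ℂ) (z1 0) * z2 0).re + μ * ‖z2 0‖ ^ 2 := by
    intro τ
    have := congrArg Complex.re (hE0 τ)
    simp only [Complex.add_re, Complex.re_ofReal_mul, conj_mul_self_re] at this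
    rw [conj_swap_re (z1 τ) (z2 τ), conj_swap_re (z1 0) (z2 0)] at this
    linear_combination this
  -- bound on the cross term
  have hcross : ∀ τ : ℝ, |((starRingEnd ℂ) (z1 τ) * z2 τ).re| ≤ K ^ 2 / 2 := by
    intro τ
    have h1' := Complex.abs_re_le_norm ((starRingEnd ℂ) (z1 τ) * z2 τ)
    have h2' : ‖(starRingEnd ℂ) (z1 τ) * z2 τ‖
        = ‖z1 τ‖ * ‖z2 τ‖ := by
      simp [map_mul]
    have h3' := hnorm τ
    nlinarith [sq_nonneg (‖z1 τ‖ - ‖z2 τ‖),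
      norm_nonneg (z1 τ), norm_nonneg (z2 τ)]
  have hmain : ∀ τ : ℝ, μ * ‖z2 τ‖ ^ 2 ≤ C := by
    intro τ
    have hβτ : |β * ((starRingEnd ℂ) (z1 τ) * z2 τ).re| ≤ |β| * (K ^ 2 / 2) := by
      rw [abs_mul]
      exact mul_le_mul_of_nonneg_left (hcross τ) (abs_nonneg β)
    have hβ0 : |β * ((starRingEnd ℂ) (z1 0) * z2 0).re| ≤ |β| * (K ^ 2 / 2) := by
      rw [abs_mul]
      exact mul_le_mul_of_nonneg_left (hcross 0) (abs_nonneg β)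
    have hE := hEre τ
    have ha1 : (0:ℝ) ≤ ‖z1 τ‖ ^ 2 := by positivity
    have ha10 : ‖z1 0‖ ^ 2 ≤ K ^ 2 := by
      have := hnorm 0
      nlinarith [norm_nonneg (z2 0)]
    have h4 := abs_le.mp hβτ
    have h5 := abs_le.mp hβ0
    rw [hC]
    nlinarith
  refine ⟨hmain, fun τ => ?_⟩
  have hμ0 : (0:ℝ) < μ := lt_of_lt_of_le one_pos hμ
  have hx : ‖z2 τ‖ ^ 2 ≤ C / μ := by
    rw [le_div_iff₀ hμ0]
    linarith [hmain τ]
  calc ‖z2 τ‖ = Real.sqrt (‖z2 τ‖ ^ 2) :=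
        (Real.sqrt_sq (norm_nonneg _)).symm
    _ ≤ Real.sqrt (C / μ) := Real.sqrt_le_sqrt hx
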